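/- Let U, Ũ be admissible MHD states with gamma-law EOS, and let a_i = max{𝓡_i(U), 𝓡_i(Ũ)} where 𝓡_i(U) = |v_i| + 𝒞_i is the spectral radius bound with 𝒞_i = (1/√2)[𝒞_s² + |B|²/ρ + √((𝒞_s² + |B|²/ρ)² - 4𝒞_s²B_i²/ρ)]^{1/2} and 𝒞_s = √(γp/ρ). Then the PP wave-speed bound satisfies α_i(U, Ũ) ≤ a_i + min{||v_i| - |ṽ_i||, |𝓒_i - 𝓒̃_i|} + |B - B̃|/√(2(ρ + ρ̃)), where 𝓒_i is defined as 𝒞_i but with 𝓒_s = p/(ρ√(2e)) in place of 𝒞_s, and α_i(U, Ũ) = min_σ α_i(U, Ũ; σ) as in Lemma 2.5. (It is assumed and may be used that 𝓒_s ≤ 𝒞_s, hence 𝓒_i ≤ 𝒞_i.) -/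

import Mathlib

noncomputable section

/-- Squared Euclidean norm on ℝ³. -/
def nsq (a : Fin 3 → ℝ) : ℝ := ∑ i, (a i) ^ 2

/-- 𝓒_s = p/(ρ√(2e)) with p = (γ-1)ρe (gamma-law EOS). -/
def scrCs (γ ρ e : ℝ) : ℝ := ((γ - 1) * ρ * e) / (ρ * Real.sqrt (2 * e))

/-- 𝓒_i built from 𝓒_s. -/
def scrC (γ : ℝ) (i : Fin 3) (ρ e : ℝ) (B : Fin 3 → ℝ) : ℝ :=
  (1 / Real.sqrt 2) * Real.sqrt ((scrCs γ ρ e) ^ 2 + nsq B / ρ +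
    Real.sqrt (((scrCs γ ρ e) ^ 2 + nsq B / ρ) ^ 2 - 4 * (scrCs γ ρ e) ^ 2 * (B i) ^ 2 / ρ))

/-- Sound speed 𝒞_s = √(γp/ρ) with p = (γ-1)ρe. -/
def calCs (γ ρ e : ℝ) : ℝ := Real.sqrt (γ * ((γ - 1) * ρ * e) / ρ)

/-- Fast magnetosonic speed 𝒞_i built from the sound speed 𝒞_s. -/
def calC (γ : ℝ) (i : Fin 3) (ρ e : ℝ) (B : Fin 3 → ℝ) : ℝ :=
  (1 / Real.sqrt 2) * Real.sqrt ((calCs γ ρ e) ^ 2 + nsq B / ρ +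
    Real.sqrt (((calCs γ ρ e) ^ 2 + nsq B / ρ) ^ 2 - 4 * (calCs γ ρ e) ^ 2 * (B i) ^ 2 / ρ))

/-- f(U, Ũ; σ) = (|B̃ - B|/√2)√(σ²/ρ + (1-σ)²/ρ̃). -/
def ffun (ρ ρ' : ℝ) (B B' : Fin 3 → ℝ) (σ : ℝ) : ℝ :=
  (Real.sqrt (nsq (B' - B)) / Real.sqrt 2) * Real.sqrt (σ ^ 2 / ρ + (1 - σ) ^ 2 / ρ')

/-- α_i(U, Ũ; σ). -/
def alphafun (γ : ℝ) (i : Fin 3) (ρ e ρ' e' : ℝ) (v B v' B' : Fin 3 → ℝ) (σ : ℝ) : ℝ :=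
  max (max (|v i| + scrC γ i ρ e B) (|v' i| + scrC γ i ρ' e' B'))
      (|σ * v i + (1 - σ) * v' i| + max (scrC γ i ρ e B) (scrC γ i ρ' e' B'))
    + ffun ρ ρ' B B' σ

lemma lemA (x y u w U W : ℝ) (hu : u ≤ U) (hw : w ≤ W) :
    max x y + max u w ≤ max (x + U) (y + W) + min |x - y| |u - w| := by
  have h1 := le_max_left (x + U) (y + W)
  have h2 := le_max_right (x + U) (y + W)
  have ha : x - y ≤ |x - y| := le_abs_self _
  have hb : y - x ≤ |x - y| := by rw [abs_sub_comm]; exact le_abs_self _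
  have hc : u - w ≤ |u - w| := le_abs_self _
  have hd : w - u ≤ |u - w| := by rw [abs_sub_comm]; exact le_abs_self _
  rcases max_cases x y with ⟨e1, _⟩ | ⟨e1, _⟩ <;>
    rcases max_cases u w with ⟨e2, _⟩ | ⟨e2, _⟩ <;>
      rcases min_cases |x - y| |u - w| with ⟨e3, _⟩ | ⟨e3, _⟩ <;>
        rw [e1, e2, e3] <;> linarith

lemma monot (s s' b c : ℝ) (hss : s ≤ s') (hc : 0 ≤ c) (hcb : c ≤ b) :
    s + b + Real.sqrt ((s + b) ^ 2 - 4 * s * c) ≤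
      s' + b + Real.sqrt ((s' + b) ^ 2 - 4 * s' * c) := by
  have hD' : 0 ≤ (s' + b) ^ 2 - 4 * s' * c := by nlinarith [sq_nonneg (s' + b - 2 * c), mul_nonneg hc (sub_nonneg.2 hcb)]
  have hsq := Real.sq_sqrt hD'
  have hroot : |s' + b - 2 * c| ≤ Real.sqrt ((s' + b) ^ 2 - 4 * s' * c) := by
    rw [← Real.sqrt_sq_eq_abs]
    exact Real.sqrt_le_sqrt (by nlinarith [mul_nonneg hc (sub_nonneg.2 hcb)])
  have key : 0 ≤ s' + b - 2 * c + Real.sqrt ((s' + b) ^ 2 - 4 * s' * c) := by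
    have := neg_le_abs (s' + b - 2 * c); linarith
  have hnn : 0 ≤ (s' - s) + Real.sqrt ((s' + b) ^ 2 - 4 * s' * c) := by
    have := Real.sqrt_nonneg ((s' + b) ^ 2 - 4 * s' * c); linarith
  have h1 : Real.sqrt ((s + b) ^ 2 - 4 * s * c) ≤
      (s' - s) + Real.sqrt ((s' + b) ^ 2 - 4 * s' * c) := by
    calc Real.sqrt ((s + b) ^ 2 - 4 * s * c)
        ≤ Real.sqrt (((s' - s) + Real.sqrt ((s' + b) ^ 2 - 4 * s' * c)) ^ 2) := by
          apply Real.sqrt_le_sqrt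
          nlinarith [mul_nonneg (by linarith : (0:ℝ) ≤ s' - s) key]
      _ = _ := Real.sqrt_sq hnn
  linarith

lemma scrCs_sq_le (γ ρ e : ℝ) (hγ : 1 < γ) (hρ : 0 < ρ) (he : 0 < e) :
    scrCs γ ρ e ^ 2 ≤ calCs γ ρ e ^ 2 := by
  have hγ1 : (0:ℝ) ≤ γ - 1 := by linarith
  have hc : calCs γ ρ e ^ 2 = γ * ((γ - 1) * ρ * e) / ρ := by
    unfold calCs
    exact Real.sq_sqrt (by positivity)
  have h2e : Real.sqrt (2 * e) ^ 2 = 2 * e := Real.sq_sqrt (by positivity)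
  have hs : Real.sqrt (2 * e) > 0 := Real.sqrt_pos.2 (by positivity)
  unfold scrCs
  rw [hc, div_pow, mul_pow ρ (Real.sqrt (2 * e)), h2e,
    div_le_div_iff₀ (by positivity) hρ]
  nlinarith [sq_nonneg ρ, sq_nonneg e, mul_pos hρ he, mul_pos (mul_pos hρ he) hρ,
    mul_pos (mul_pos (mul_pos hρ he) hρ) (mul_pos hρ he)]

lemma scrC_le_calC (γ : ℝ) (hγ : 1 < γ) (i : Fin 3) (ρ e : ℝ) (B : Fin 3 → ℝ)
    (hρ : 0 < ρ) (he : 0 < e) : scrC γ i ρ e B ≤ calC γ i ρ e B := by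
  unfold scrC calC
  have hb : (B i) ^ 2 ≤ nsq B := by
    unfold nsq
    exact Finset.single_le_sum (fun j _ => sq_nonneg (B j)) (Finset.mem_univ i)
  apply mul_le_mul_of_nonneg_left _ (by positivity)
  apply Real.sqrt_le_sqrt
  have h := monot (scrCs γ ρ e ^ 2) (calCs γ ρ e ^ 2) (nsq B / ρ) ((B i) ^ 2 / ρ)
    (scrCs_sq_le γ ρ e hγ hρ he) (by positivity) (by gcongr)
  calc scrCs γ ρ e ^ 2 + nsq B / ρ +
      Real.sqrt ((scrCs γ ρ e ^ 2 + nsq B / ρ) ^ 2 - 4 * scrCs γ ρ e ^ 2 * (B i) ^ 2 / ρ)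
      = scrCs γ ρ e ^ 2 + nsq B / ρ +
      Real.sqrt ((scrCs γ ρ e ^ 2 + nsq B / ρ) ^ 2 - 4 * (scrCs γ ρ e ^ 2) * ((B i) ^ 2 / ρ)) := by
        ring_nf
    _ ≤ calCs γ ρ e ^ 2 + nsq B / ρ +
      Real.sqrt ((calCs γ ρ e ^ 2 + nsq B / ρ) ^ 2 - 4 * (calCs γ ρ e ^ 2) * ((B i) ^ 2 / ρ)) := h
    _ = calCs γ ρ e ^ 2 + nsq B / ρ +
      Real.sqrt ((calCs γ ρ e ^ 2 + nsq B / ρ) ^ 2 - 4 * calCs γ ρ e ^ 2 * (B i) ^ 2 / ρ) := by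
        ring_nf

/-- α_i(U, Ũ) = inf_σ α_i(U, Ũ; σ) satisfies
α_i(U, Ũ) ≤ a_i + min{||v_i| - |ṽ_i||, |𝓒_i - 𝓒̃_i|} + |B - B̃|/√(2(ρ + ρ̃)),
where a_i = max{|v_i| + 𝒞_i, |ṽ_i| + 𝒞̃_i} is the spectral-radius bound. -/
theorem alpha_min_bound (γ : ℝ) (hγ : 1 < γ) (i : Fin 3)
    (ρ e ρ' e' : ℝ) (v B v' B' : Fin 3 → ℝ)
    (hρ : 0 < ρ) (he : 0 < e) (hρ' : 0 < ρ') (he' : 0 < e') :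
    sInf (Set.range (alphafun γ i ρ e ρ' e' v B v' B')) ≤
      max (|v i| + calC γ i ρ e B) (|v' i| + calC γ i ρ' e' B')
      + min (abs (|v i| - |v' i|)) (|scrC γ i ρ e B - scrC γ i ρ' e' B'|)
      + Real.sqrt (nsq (B - B')) / Real.sqrt (2 * (ρ + ρ')) := by
  have hbdd : BddBelow (Set.range (alphafun γ i ρ e ρ' e' v B v' B')) := by
    refine ⟨0, ?_⟩
    rintro _ ⟨σ, rfl⟩
    unfold alphafun ffun scrC
    positivity
  set σ₀ : ℝ := ρ / (ρ + ρ') with hσ₀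
  have hσ0 : 0 ≤ σ₀ := by positivity
  have hσ1 : σ₀ ≤ 1 := by
    rw [hσ₀, div_le_one (by positivity)]; linarith
  have hle : sInf (Set.range (alphafun γ i ρ e ρ' e' v B v' B')) ≤
      alphafun γ i ρ e ρ' e' v B v' B' σ₀ := csInf_le hbdd ⟨σ₀, rfl⟩
  refine hle.trans ?_
  -- f at σ₀
  have hfe : ffun ρ ρ' B B' σ₀ = Real.sqrt (nsq (B - B')) / Real.sqrt (2 * (ρ + ρ')) := by
    unfold ffun
    have h1 : nsq (B' - B) = nsq (B - B') := by
      unfold nsq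
      refine Finset.sum_congr rfl fun j _ => ?_
      simp [Pi.sub_apply]; ring
    have h2 : σ₀ ^ 2 / ρ + (1 - σ₀) ^ 2 / ρ' = 1 / (ρ + ρ') := by
      rw [hσ₀]
      field_simp
      ring
    rw [h1, h2, one_div, Real.sqrt_inv, Real.sqrt_mul (by norm_num : (0:ℝ) ≤ 2)]
    ring
  have hC : scrC γ i ρ e B ≤ calC γ i ρ e B := scrC_le_calC γ hγ i ρ e B hρ he
  have hC' : scrC γ i ρ' e' B' ≤ calC γ i ρ' e' B' := scrC_le_calC γ hγ i ρ' e' B' hρ' he'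
  have hm : 0 ≤ min (abs (|v i| - |v' i|)) (|scrC γ i ρ e B - scrC γ i ρ' e' B'|) :=
    le_min (abs_nonneg _) (abs_nonneg _)
  unfold alphafun
  rw [hfe]
  gcongr ?_ + _
  apply max_le
  · refine le_trans (max_le_max (add_le_add_right hC _) (add_le_add_right hC' _)) ?_
    linarith [le_refl (max (|v i| + calC γ i ρ e B) (|v' i| + calC γ i ρ' e' B'))]
  · have habs : |σ₀ * v i + (1 - σ₀) * v' i| ≤ max (|v i|) (|v' i|) := by
      calc |σ₀ * v i + (1 - σ₀) * v' i| ≤ |σ₀ * v i| + |(1 - σ₀) * v' i| := abs_add_le _ _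
        _ = σ₀ * |v i| + (1 - σ₀) * |v' i| := by
            rw [abs_mul, abs_mul, abs_of_nonneg hσ0,
              abs_of_nonneg (show (0:ℝ) ≤ 1 - σ₀ from by linarith)]
        _ ≤ σ₀ * max (|v i|) (|v' i|) + (1 - σ₀) * max (|v i|) (|v' i|) :=
            add_le_add (mul_le_mul_of_nonneg_left (le_max_left _ _) hσ0)
              (mul_le_mul_of_nonneg_left (le_max_right _ _) (by linarith))
        _ = max (|v i|) (|v' i|) := by ring
    refine le_trans (add_le_add_left habs _) ?_
    exact lemA (|v i|) (|v' i|) (scrC γ i ρ e B) (scrC γ i ρ' e' B')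
      (calC γ i ρ e B) (calC γ i ρ' e' B') hC hC'

end
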